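/- Let n ≥ 3, let k be an integer, and let λ be a real 2×n matrix with columns extended by λ_{i+n} = (−1)^{k−1}·λ_i, satisfying ⟨i i+1⟩_λ ≠ 0 for all i ∈ {1,…,n} (so λ has rank 2). Then the left kernel of Q_λ, i.e. the set of row vectors x ∈ ℝⁿ with x·Q_λ = 0 (where x is extended by x_{i+n} = (−1)^{k−1}·x_i), is exactly the row span of λ; in particular Q_λ has rank n−2 and, for every real k×n matrix C of rank k whose row span contains the row span of λ, the matrix C·Q_λ has rank k−2. -/

import Mathlib

open scoped Matrix

/-- Twisted-cyclic extension of a vector `x : Fin n → ℝ` to indices in `ℤ`,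
with `x_{i+n} = ε • x_i`. -/
noncomputable def vecExt {n : ℕ} (ε : ℝ) (x : Fin n → ℝ) (i : ℤ) : ℝ :=
  if h : 0 < n then
    ε ^ (i / (n : ℤ)) *
      x ⟨(i % (n : ℤ)).toNat, by
        have hn : (0 : ℤ) < (n : ℤ) := by exact_mod_cast h
        have h1 : 0 ≤ i % (n : ℤ) := Int.emod_nonneg i hn.ne'
        have h2 : i % (n : ℤ) < (n : ℤ) := Int.emod_lt_of_pos i hn
        omega⟩
  else 0

/-- Twisted-cyclic extension of the columns of a matrix. -/
noncomputable def colExt {m n : ℕ} (ε : ℝ) (A : Matrix (Fin m) (Fin n) ℝ) (i : ℤ) :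
    Fin m → ℝ :=
  fun r => vecExt ε (fun j => A r j) i

/-- The bracket `⟨i j⟩ = det(λ_i, λ_j)` of two (extended) columns of a `2 × n` matrix. -/
noncomputable def brkt {n : ℕ} (ε : ℝ) (A : Matrix (Fin 2) (Fin n) ℝ) (i j : ℤ) : ℝ :=
  colExt ε A i 0 * colExt ε A j 1 - colExt ε A i 1 * colExt ε A j 0

/-- The sign `(-1)^(k-1)` used in the twisted cyclic symmetry. -/
noncomputable def sgn (k : ℤ) : ℝ := (-1 : ℝ) ^ (k - 1)

/-- The angle in `[0, π]` between two vectors in `ℝ²`. -/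
noncomputable def ang2 (v w : Fin 2 → ℝ) : ℝ :=
  Real.arccos ((v 0 * w 0 + v 1 * w 1) /
    (Real.sqrt (v 0 ^ 2 + v 1 ^ 2) * Real.sqrt (w 0 ^ 2 + w 1 ^ 2)))

/-- The total winding angle of the columns of a `2 × n` matrix. -/
noncomputable def wind {n : ℕ} (ε : ℝ) (A : Matrix (Fin 2) (Fin n) ℝ) : ℝ :=
  ∑ i ∈ Finset.range n, ang2 (colExt ε A (i : ℤ)) (colExt ε A ((i : ℤ) + 1))

/-- The set `λ⁺_{k,n}`. -/
noncomputable def lamPlus (n : ℕ) (k : ℤ) (A : Matrix (Fin 2) (Fin n) ℝ) : Prop :=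
  (∀ i ∈ Finset.range n, 0 < brkt (sgn k) A (i : ℤ) ((i : ℤ) + 1)) ∧
  wind (sgn k) A = ((k : ℝ) - 1) * Real.pi

/-- The set `λ̃⁺_{k,n}`. -/
noncomputable def latPlus (n : ℕ) (k : ℤ) (A : Matrix (Fin 2) (Fin n) ℝ) : Prop :=
  (∀ i ∈ Finset.range n, 0 < brkt (sgn k) A (i : ℤ) ((i : ℤ) + 1)) ∧
  wind (sgn k) A = ((k : ℝ) + 1) * Real.pi

/-- The set `λλ̃⁺_{k,n}` of pairs with momentum conservation. -/
noncomputable def lamlatPlus (n : ℕ) (k : ℤ) (lam lat : Matrix (Fin 2) (Fin n) ℝ) : Prop :=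
  lamPlus n k lam ∧ latPlus n k lat ∧ lam * lat.transpose = 0

/-- The row span of a matrix, as a submodule of `ℝⁿ`. -/
def rowSpan {m n : ℕ} (A : Matrix (Fin m) (Fin n) ℝ) : Submodule ℝ (Fin n → ℝ) :=
  Submodule.span ℝ (Set.range fun i => A i)

/-- All maximal minors are nonnegative. -/
def nonnegMinors {k n : ℕ} (C : Matrix (Fin k) (Fin n) ℝ) : Prop :=
  ∀ f : Fin k → Fin n, StrictMono f → 0 ≤ (C.submatrix id f).det

/-- All maximal minors are positive. -/
def posMinors {k n : ℕ} (C : Matrix (Fin k) (Fin n) ℝ) : Prop :=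
  ∀ f : Fin k → Fin n, StrictMono f → 0 < (C.submatrix id f).det

/-- `C` represents a point of the totally nonnegative Grassmannian `Gr_{≥0}(k,n)`. -/
def GrNonneg {k n : ℕ} (C : Matrix (Fin k) (Fin n) ℝ) : Prop :=
  C.rank = k ∧ nonnegMinors C

/-- `C` represents a point of the totally positive Grassmannian `Gr_{>0}(k,n)`. -/
def GrPos {k n : ℕ} (C : Matrix (Fin k) (Fin n) ℝ) : Prop :=
  C.rank = k ∧ posMinors C

/-- `alt` negates every second column. -/
def altM {m n : ℕ} (A : Matrix (Fin m) (Fin n) ℝ) : Matrix (Fin m) (Fin n) ℝ :=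
  Matrix.of fun i j => (-1 : ℝ) ^ (j : ℕ) * A i j

/-- `(2,0)`-nondegeneracy: consecutive columns are linearly independent. -/
def Nondeg20 (n : ℕ) (k : ℤ) {m : ℕ} (C : Matrix (Fin m) (Fin n) ℝ) : Prop :=
  ∀ i : ℤ, LinearIndependent ℝ ![colExt (sgn k) C i, colExt (sgn k) C (i + 1)]

/-- `(0,2)`-nondegeneracy: `C_i ∈ span(C_{i+1}, …, C_{i+n-2})`. -/
def Nondeg02 (n : ℕ) (k : ℤ) {m : ℕ} (C : Matrix (Fin m) (Fin n) ℝ) : Prop :=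
  ∀ i : ℤ, colExt (sgn k) C i ∈
    Submodule.span ℝ ((fun t : ℤ => colExt (sgn k) C t) '' Set.Icc (i + 1) (i + (n : ℤ) - 2))

/-- Connectedness of a matrix: no cyclic splitting of the columns into a direct sum. -/
def ConnMat (n : ℕ) (k : ℤ) {m : ℕ} (C : Matrix (Fin m) (Fin n) ℝ) : Prop :=
  ¬ ∃ i j : ℤ, i < j ∧ j < i + (n : ℤ) ∧
    IsCompl (Submodule.span ℝ ((fun t : ℤ => colExt (sgn k) C t) '' Set.Icc i (j - 1)))
      (Submodule.span ℝ ((fun t : ℤ => colExt (sgn k) C t) '' Set.Icc j (i + (n : ℤ) - 1)))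

/-- `C` represents a point of `Gr_{≥2}(k,n)`: totally nonnegative, connected,
and 2-nondegenerate. -/
def GrGe2 (n k : ℕ) (C : Matrix (Fin k) (Fin n) ℝ) : Prop :=
  GrNonneg C ∧ Nondeg20 n (k : ℤ) C ∧ Nondeg02 n (k : ℤ) C ∧ ConnMat n (k : ℤ) C

/-- The orthogonal complement of a subspace of `ℝⁿ` with respect to the dot product. -/
noncomputable def perpSub {n : ℕ} (U : Submodule ℝ (Fin n → ℝ)) : Submodule ℝ (Fin n → ℝ) where
  carrier := {v | ∀ u ∈ U, dotProduct v u = 0}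
  zero_mem' := fun u _ => zero_dotProduct u
  add_mem' := fun {a b} ha hb u hu => by
    rw [add_dotProduct, ha u hu, hb u hu, add_zero]
  smul_mem' := fun c v hv u hu => by
    rw [smul_dotProduct, hv u hu, smul_zero]

/-- The planar Mandelstam variables. -/
noncomputable def Mand {n : ℕ} (ε : ℝ) (lam lat : Matrix (Fin 2) (Fin n) ℝ) (i j : ℤ) : ℝ :=
  ∑ p ∈ Finset.Ioc i j, ∑ q ∈ Finset.Ioc p j, brkt ε lam p q * brkt ε lat p q

/-- `Q` is the magic projector `Q_λ`: it is determined by its action on row vectors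
(extended twisted-cyclically with sign `εx`, the brackets of `lam` using sign `εl`). -/
def IsQmat {n : ℕ} (εx εl : ℝ) (lam : Matrix (Fin 2) (Fin n) ℝ)
    (Q : Matrix (Fin n) (Fin n) ℝ) : Prop :=
  ∀ (x : Fin n → ℝ) (b : Fin n),
    Matrix.vecMul x Q b =
      (vecExt εx x (((b : ℕ) : ℤ) - 1) * brkt εl lam ((b : ℕ) : ℤ) (((b : ℕ) : ℤ) + 1)
        + vecExt εx x ((b : ℕ) : ℤ) * brkt εl lam (((b : ℕ) : ℤ) + 1) (((b : ℕ) : ℤ) - 1)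
        + vecExt εx x (((b : ℕ) : ℤ) + 1) * brkt εl lam (((b : ℕ) : ℤ) - 1) ((b : ℕ) : ℤ))
      / (brkt εl lam (((b : ℕ) : ℤ) - 1) ((b : ℕ) : ℤ) *
          brkt εl lam ((b : ℕ) : ℤ) (((b : ℕ) : ℤ) + 1))

/-- The coefficients `t^λ_i`. -/
noncomputable def tcoef {n : ℕ} (ε : ℝ) (lam : Matrix (Fin 2) (Fin n) ℝ) (j : ℤ) : ℝ :=
  brkt ε lam (j + 1) (j - 1) / (brkt ε lam (j - 1) j * brkt ε lam j (j + 1))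

/-- The involution `Θ` on `2 × n` matrices. -/
noncomputable def Theta {n : ℕ} (ε : ℝ) (lam : Matrix (Fin 2) (Fin n) ℝ) :
    Matrix (Fin 2) (Fin n) ℝ :=
  Matrix.of fun r j =>
    (-1 : ℝ) ^ (j : ℕ) * tcoef ε lam ((j : ℕ) : ℤ) * (if r = 0 then lam 0 j else -(lam 1 j))

/-- The Minkowski bilinear form on `ℝ^{2,2} ≅ ℂ²`. -/
noncomputable def minkDot (P Q : ℂ × ℂ) : ℝ :=
  (P.1 * (starRingEnd ℂ) Q.1 - P.2 * (starRingEnd ℂ) Q.2).re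

section Stmt6Aux

lemma vecExt_of_lt' {n : ℕ} (ε : ℝ) (x : Fin n → ℝ) {i : ℤ} (h0 : 0 ≤ i) (h : i < n) :
    vecExt ε x i = x ⟨i.toNat, by omega⟩ := by
  have hn : 0 < n := by omega
  rw [vecExt, dif_pos hn]
  simp only [Int.ediv_eq_zero_of_lt h0 h, Int.emod_eq_of_lt h0 h, zpow_zero, one_mul]

lemma vecExt_shift' {n : ℕ} (hn : 0 < n) {ε : ℝ} (hε : ε ≠ 0) (x : Fin n → ℝ) (i : ℤ) :
    vecExt ε x (i + n) = ε * vecExt ε x i := by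
  have hnz : (n : ℤ) ≠ 0 := by exact_mod_cast hn.ne'
  rw [vecExt, vecExt, dif_pos hn, dif_pos hn]
  have hq : (i + (n:ℤ)) / n = i / n + 1 := by
    have := Int.add_mul_ediv_right i 1 hnz
    simpa using this
  have hr : (i + (n:ℤ)) % n = i % n := by
    simpa using Int.add_mul_emod_self_left (a := i) (b := (n:ℤ)) (c := 1)
  simp only [hq, hr, zpow_add_one₀ hε]
  ring

lemma vecExt_addv {n : ℕ} (ε : ℝ) (x y : Fin n → ℝ) (i : ℤ) :
    vecExt ε (x + y) i = vecExt ε x i + vecExt ε y i := by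
  unfold vecExt; split <;> simp [mul_add]

lemma vecExt_subv {n : ℕ} (ε : ℝ) (x y : Fin n → ℝ) (i : ℤ) :
    vecExt ε (x - y) i = vecExt ε x i - vecExt ε y i := by
  unfold vecExt; split <;> simp [mul_sub]

lemma vecExt_smulv {n : ℕ} (ε c : ℝ) (x : Fin n → ℝ) (i : ℤ) :
    vecExt ε (c • x) i = c * vecExt ε x i := by
  unfold vecExt
  split
  · simp; ring
  · simp

lemma sgn_ne_zero (k : ℤ) : sgn k ≠ 0 := by
  unfold sgn; exact zpow_ne_zero _ (by norm_num)

lemma sgn_mul_self (k : ℤ) : sgn k * sgn k = 1 := by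
  unfold sgn
  rw [← zpow_add₀ (by norm_num : (-1:ℝ) ≠ 0), show k - 1 + (k - 1) = 2 * (k - 1) by ring,
    zpow_mul]
  norm_num

lemma colExt_shift' {n : ℕ} (hn : 0 < n) {ε : ℝ} (hε : ε ≠ 0)
    (A : Matrix (Fin 2) (Fin n) ℝ) (i : ℤ) (r : Fin 2) :
    colExt ε A (i + n) r = ε * colExt ε A i r :=
  vecExt_shift' hn hε _ i

lemma brkt_shift2 {n : ℕ} (hn : 0 < n) {ε : ℝ} (hε : ε ≠ 0) (hε2 : ε * ε = 1)
    (A : Matrix (Fin 2) (Fin n) ℝ) (i j : ℤ) :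
    brkt ε A (i + n) (j + n) = brkt ε A i j := by
  unfold brkt
  rw [colExt_shift' hn hε, colExt_shift' hn hε, colExt_shift' hn hε, colExt_shift' hn hε]
  linear_combination (colExt ε A i 0 * colExt ε A j 1 - colExt ε A i 1 * colExt ε A j 0) * hε2

lemma periodic_reduce (n : ℕ) (hn : 0 < n) (c : ℝ) (hc : c ≠ 0) (f : ℤ → ℝ)
    (hf : ∀ i : ℤ, f (i + n) = c * f i) (i : ℤ) :
    f i = c ^ (i / (n:ℤ)) * f (i % (n:ℤ)) := by
  have key : ∀ m : ℤ, ∀ j : ℤ, f (j + n * m) = c ^ m * f j := by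
    intro m
    induction m using Int.induction_on with
    | zero => simp
    | succ m ih =>
      intro j
      have e : j + (n:ℤ) * ((m:ℤ) + 1) = (j + n * m) + n := by ring
      rw [e, hf, ih j, zpow_add_one₀ hc]
      ring
    | pred m ih =>
      intro j
      have h1 := hf (j + (n:ℤ) * (-(m:ℤ) - 1))
      rw [show j + (n:ℤ) * (-(m:ℤ) - 1) + n = j + n * (-(m:ℤ)) by ring, ih j] at h1
      apply mul_left_cancel₀ hc
      rw [show c * (c ^ (-(m:ℤ) - 1) * f j) = c ^ ((-(m:ℤ) - 1) + 1) * f j by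
        rw [zpow_add_one₀ hc]; ring]
      rw [show (-(m:ℤ) - 1) + 1 = -(m:ℤ) by ring]
      exact h1.symm
  have := key (i / (n:ℤ)) (i % (n:ℤ))
  rwa [show i % (n:ℤ) + (n:ℤ) * (i / (n:ℤ)) = i from Int.emod_add_mul_ediv i n] at this

lemma cramer3 {n : ℕ} (ε : ℝ) (A : Matrix (Fin 2) (Fin n) ℝ) (r : Fin 2) (i : ℤ) :
    colExt ε A (i-1) r * brkt ε A i (i+1) + colExt ε A i r * brkt ε A (i+1) (i-1)
      + colExt ε A (i+1) r * brkt ε A (i-1) i = 0 := by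
  unfold brkt
  fin_cases r <;> simp only [Fin.zero_eta, Fin.mk_one] <;> ring

/-- The numerator appearing in the definition of `Q_λ`. -/
noncomputable def Nf {n : ℕ} (ε : ℝ) (lam : Matrix (Fin 2) (Fin n) ℝ)
    (x : Fin n → ℝ) (i : ℤ) : ℝ :=
  vecExt ε x (i-1) * brkt ε lam i (i+1) + vecExt ε x i * brkt ε lam (i+1) (i-1)
    + vecExt ε x (i+1) * brkt ε lam (i-1) i

lemma Nf_shift {n : ℕ} (hn : 0 < n) {ε : ℝ} (hε : ε ≠ 0) (hε2 : ε * ε = 1)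
    (lam : Matrix (Fin 2) (Fin n) ℝ) (x : Fin n → ℝ) (i : ℤ) :
    Nf ε lam x (i + n) = ε * Nf ε lam x i := by
  unfold Nf
  rw [show i + (n:ℤ) - 1 = (i - 1) + n by ring, show i + (n:ℤ) + 1 = (i + 1) + n by ring]
  rw [vecExt_shift' hn hε, vecExt_shift' hn hε, vecExt_shift' hn hε]
  rw [brkt_shift2 hn hε hε2, brkt_shift2 hn hε hε2, brkt_shift2 hn hε hε2]
  ring

lemma Nf_add {n : ℕ} (ε : ℝ) (lam : Matrix (Fin 2) (Fin n) ℝ) (x y : Fin n → ℝ) (i : ℤ) :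
    Nf ε lam (x + y) i = Nf ε lam x i + Nf ε lam y i := by
  unfold Nf
  rw [vecExt_addv, vecExt_addv, vecExt_addv]; ring

lemma Nf_sub {n : ℕ} (ε : ℝ) (lam : Matrix (Fin 2) (Fin n) ℝ) (x y : Fin n → ℝ) (i : ℤ) :
    Nf ε lam (x - y) i = Nf ε lam x i - Nf ε lam y i := by
  unfold Nf
  rw [vecExt_subv, vecExt_subv, vecExt_subv]; ring

lemma Nf_smul {n : ℕ} (ε c : ℝ) (lam : Matrix (Fin 2) (Fin n) ℝ) (x : Fin n → ℝ) (i : ℤ) :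
    Nf ε lam (c • x) i = c * Nf ε lam x i := by
  unfold Nf
  rw [vecExt_smulv, vecExt_smulv, vecExt_smulv]; ring

lemma Nf_row {n : ℕ} (ε : ℝ) (lam : Matrix (Fin 2) (Fin n) ℝ) (r : Fin 2) (i : ℤ) :
    Nf ε lam (lam r) i = 0 :=
  cramer3 ε lam r i

end Stmt6Aux

set_option synthInstance.maxHeartbeats 1000000 in
lemma finrank_ker_domRestrict {M N : Type*} [AddCommGroup M] [AddCommGroup N]
    [Module ℝ M] [Module ℝ N] (f : M →ₗ[ℝ] N) (p : Submodule ℝ M)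
    (h : LinearMap.ker f ≤ p) :
    Module.finrank ℝ (LinearMap.ker (f.domRestrict p))
      = Module.finrank ℝ (LinearMap.ker f) := by
  have hkerres : LinearMap.ker (f.domRestrict p) = Submodule.comap p.subtype (LinearMap.ker f) := by
    ext v
    simp [LinearMap.mem_ker]
  rw [hkerres]
  exact (Submodule.comapSubtypeEquivOfLe h).finrank_eq

/-- the left kernel of the magic projector `Q_λ` is exactly the
row span of `λ`; in particular `Q_λ` has rank `n - 2` and `C·Q_λ` has rank `k - 2`
for every rank-`k` matrix `C` whose row span contains that of `λ`. -/
theorem stmt6 (n : ℕ) (hn : 3 ≤ n) (k : ℕ)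
    (lam : Matrix (Fin 2) (Fin n) ℝ)
    (hbr : ∀ i ∈ Finset.range n, brkt (sgn (k : ℤ)) lam (i : ℤ) ((i : ℤ) + 1) ≠ 0)
    (Q : Matrix (Fin n) (Fin n) ℝ) (hQ : IsQmat (sgn (k : ℤ)) (sgn (k : ℤ)) lam Q) :
    (∀ x : Fin n → ℝ, Matrix.vecMul x Q = 0 ↔ x ∈ rowSpan lam) ∧
    Q.rank = n - 2 ∧
    (∀ C : Matrix (Fin k) (Fin n) ℝ, C.rank = k → rowSpan lam ≤ rowSpan C →
      (C * Q).rank = k - 2) := by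
  have hn0 : 0 < n := by omega
  have hnz : ((n:ℤ)) ≠ 0 := by exact_mod_cast hn0.ne'
  have hnpos : (0:ℤ) < n := by exact_mod_cast hn0
  have hε : sgn (k:ℤ) ≠ 0 := sgn_ne_zero _
  have hε2 : sgn (k:ℤ) * sgn (k:ℤ) = 1 := sgn_mul_self _
  set ε : ℝ := sgn (k:ℤ) with hεdef
  -- brackets of consecutive columns are nonzero at all integer indices
  have hBall : ∀ i : ℤ, brkt ε lam i (i + 1) ≠ 0 := by
    intro i
    have hper : ∀ j : ℤ, brkt ε lam (j + n) ((j + n) + 1) = 1 * brkt ε lam j (j + 1) := by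
      intro j
      rw [one_mul, show (j:ℤ) + n + 1 = (j + 1) + n by ring]
      exact brkt_shift2 hn0 hε hε2 lam j (j+1)
    have hred := periodic_reduce n hn0 1 one_ne_zero (fun t => brkt ε lam t (t + 1)) hper i
    simp only [one_zpow, one_mul] at hred
    rw [hred]
    have h1 : 0 ≤ i % (n:ℤ) := Int.emod_nonneg i hnz
    have h2 : i % (n:ℤ) < n := Int.emod_lt_of_pos i hnpos
    have hcast : (((i % (n:ℤ)).toNat : ℕ) : ℤ) = i % n := by omega
    rw [← hcast]
    exact hbr _ (Finset.mem_range.mpr (by omega))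
  -- membership in the row span implies vanishing numerators
  have hNmem : ∀ x : Fin n → ℝ, x ∈ rowSpan lam → ∀ i : ℤ, Nf ε lam x i = 0 := by
    intro x hx i
    rw [rowSpan] at hx
    obtain ⟨c, hc⟩ := (Submodule.mem_span_range_iff_exists_fun ℝ).mp hx
    rw [Fin.sum_univ_two] at hc
    rw [← hc, Nf_add, Nf_smul, Nf_smul, Nf_row, Nf_row]
    ring
  -- the kernel characterization
  have hker : ∀ x : Fin n → ℝ, Matrix.vecMul x Q = 0 ↔ x ∈ rowSpan lam := by
    intro x
    constructor
    · intro hx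
      -- numerators vanish at natural indices < n
      have hnum : ∀ m : ℕ, m < n → Nf ε lam x (m : ℤ) = 0 := by
        intro m hm
        have h0 : Matrix.vecMul x Q ⟨m, hm⟩ = 0 := by rw [hx]; rfl
        rw [hQ x ⟨m, hm⟩] at h0
        have hd : brkt ε lam ((m:ℤ) - 1) (m:ℤ) * brkt ε lam (m:ℤ) ((m:ℤ)+1) ≠ 0 := by
          apply mul_ne_zero
          · have := hBall ((m:ℤ) - 1)
            rwa [show (m:ℤ) - 1 + 1 = (m:ℤ) by ring] at this
          · exact hBall _
        have := (div_eq_zero_iff.mp h0).resolve_right hd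
        simpa only [Nf] using this
      -- numerators vanish at all integer indices
      have hNall : ∀ i : ℤ, Nf ε lam x i = 0 := by
        intro i
        have := periodic_reduce n hn0 ε hε (Nf ε lam x)
          (fun j => Nf_shift hn0 hε hε2 lam x j) i
        rw [this]
        have h1 : 0 ≤ i % (n:ℤ) := Int.emod_nonneg i hnz
        have h2 : i % (n:ℤ) < n := Int.emod_lt_of_pos i hnpos
        have hv := hnum (i % (n:ℤ)).toNat (by omega)
        rw [show (((i % (n:ℤ)).toNat : ℕ) : ℤ) = i % n by omega] at hv
        rw [hv, mul_zero]
      -- set up the 2×2 system at columns 0 and 1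
      set i0 : Fin n := ⟨0, by omega⟩ with hi0
      set i1 : Fin n := ⟨1, by omega⟩ with hi1
      have hv0 : ∀ r : Fin 2, colExt ε lam (0:ℤ) r = lam r i0 := fun r =>
        vecExt_of_lt' ε _ le_rfl hnpos
      have hv1 : ∀ r : Fin 2, colExt ε lam (1:ℤ) r = lam r i1 := fun r =>
        vecExt_of_lt' ε _ (by norm_num) (by exact_mod_cast (by omega : 1 < n))
      have hDval : brkt ε lam 0 1 = lam 0 i0 * lam 1 i1 - lam 1 i0 * lam 0 i1 := by
        unfold brkt
        rw [hv0, hv0, hv1, hv1]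
      have hD : brkt ε lam 0 1 ≠ 0 := by
        have := hBall 0
        norm_num at this
        exact this
      have hE : (lam 0 i0 * lam 1 i1 - lam 1 i0 * lam 0 i1) ≠ 0 := hDval ▸ hD
      obtain ⟨c0, c1, hyc0, hyc1⟩ :
          ∃ c0 c1 : ℝ, (c0 • lam 0 + c1 • lam 1) i0 = x i0 ∧
            (c0 • lam 0 + c1 • lam 1) i1 = x i1 := by
        refine ⟨(x i0 * lam 1 i1 - x i1 * lam 1 i0) / (lam 0 i0 * lam 1 i1 - lam 1 i0 * lam 0 i1),
          (x i1 * lam 0 i0 - x i0 * lam 0 i1) / (lam 0 i0 * lam 1 i1 - lam 1 i0 * lam 0 i1),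
          ?_, ?_⟩ <;>
        · simp only [Pi.add_apply, Pi.smul_apply, smul_eq_mul]
          rw [div_mul_eq_mul_div, div_mul_eq_mul_div, ← add_div, div_eq_iff hE]
          ring
      have hymem : (c0 • lam 0 + c1 • lam 1) ∈ rowSpan lam :=
        Submodule.add_mem _
          (Submodule.smul_mem _ _ (Submodule.subset_span ⟨0, rfl⟩))
          (Submodule.smul_mem _ _ (Submodule.subset_span ⟨1, rfl⟩))
      -- the difference z vanishes
      have hNz : ∀ i : ℤ, Nf ε lam (x - (c0 • lam 0 + c1 • lam 1)) i = 0 := by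
        intro i
        rw [Nf_sub, hNall i, hNmem _ hymem i, sub_zero]
      have hz0 : vecExt ε (x - (c0 • lam 0 + c1 • lam 1)) (0:ℤ) = 0 := by
        rw [vecExt_of_lt' ε _ le_rfl hnpos]
        show (x - (c0 • lam 0 + c1 • lam 1)) i0 = 0
        simp [hyc0]
      have hz1 : vecExt ε (x - (c0 • lam 0 + c1 • lam 1)) (1:ℤ) = 0 := by
        rw [vecExt_of_lt' ε _ (by norm_num) (by exact_mod_cast (by omega : 1 < n))]
        show (x - (c0 • lam 0 + c1 • lam 1)) i1 = 0
        simp [hyc1]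
      have hmain2 : ∀ m : ℕ, vecExt ε (x - (c0 • lam 0 + c1 • lam 1)) (m:ℤ) = 0 ∧
          vecExt ε (x - (c0 • lam 0 + c1 • lam 1)) ((m:ℤ)+1) = 0 := by
        intro m
        induction m with
        | zero =>
          refine ⟨by simpa using hz0, by simpa using hz1⟩
        | succ m ih =>
          constructor
          · rw [show (((m+1:ℕ)):ℤ) = (m:ℤ) + 1 by push_cast; ring]
            exact ih.2
          · have hN := hNz ((m:ℤ) + 1)
            simp only [Nf] at hN
            rw [show (m:ℤ) + 1 - 1 = (m:ℤ) by ring] at hN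
            rw [ih.1, ih.2, zero_mul, zero_mul, zero_add, zero_add] at hN
            have := (mul_eq_zero.mp hN).resolve_right (hBall (m:ℤ))
            rw [show (((m+1:ℕ)):ℤ) + 1 = (m:ℤ) + 1 + 1 by push_cast; ring]
            exact this
      have hxy : x = c0 • lam 0 + c1 • lam 1 := by
        funext j
        have hj := (hmain2 (j:ℕ)).1
        rw [vecExt_of_lt' ε _ (by positivity) (by exact_mod_cast j.isLt)] at hj
        have : (x - (c0 • lam 0 + c1 • lam 1)) j = 0 := by
          simpa using hj
        have := sub_eq_zero.mp (by simpa [Pi.sub_apply] using this)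
        exact this
      rw [hxy]
      exact hymem
    · intro hx
      funext b
      rw [hQ x b]
      have : Nf ε lam x (((b:ℕ)):ℤ) = 0 := hNmem x hx _
      simp only [Nf] at this
      rw [this, zero_div]
      rfl
  -- translate to the kernel of `mulVecLin Qᵀ`
  have hkerT : LinearMap.ker (Matrix.mulVecLin Qᵀ) = rowSpan lam := by
    ext x
    rw [LinearMap.mem_ker, Matrix.mulVecLin_apply, Matrix.mulVec_transpose]
    exact hker x
  -- the rows of lam are linearly independent
  have hv0 : ∀ r : Fin 2, colExt ε lam (0:ℤ) r = lam r ⟨0, by omega⟩ := fun r =>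
    vecExt_of_lt' ε _ le_rfl hnpos
  have hv1 : ∀ r : Fin 2, colExt ε lam (1:ℤ) r = lam r ⟨1, by omega⟩ := fun r =>
    vecExt_of_lt' ε _ (by norm_num) (by exact_mod_cast (by omega : 1 < n))
  have hDval : brkt ε lam 0 1 =
      lam 0 ⟨0, by omega⟩ * lam 1 ⟨1, by omega⟩ - lam 1 ⟨0, by omega⟩ * lam 0 ⟨1, by omega⟩ := by
    unfold brkt
    rw [hv0, hv0, hv1, hv1]
  have hD : brkt ε lam 0 1 ≠ 0 := by
    have := hBall 0
    norm_num at this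
    exact this
  have hE : (lam 0 ⟨0, by omega⟩ * lam 1 ⟨1, by omega⟩
      - lam 1 ⟨0, by omega⟩ * lam 0 ⟨1, by omega⟩ : ℝ) ≠ 0 := hDval ▸ hD
  have hli : LinearIndependent ℝ (fun i : Fin 2 => lam i) := by
    rw [Fintype.linearIndependent_iff]
    intro g hg
    have hsum : g 0 • lam 0 + g 1 • lam 1 = 0 := by
      rw [← hg, Fin.sum_univ_two]
    have h0 : g 0 * lam 0 ⟨0, by omega⟩ + g 1 * lam 1 ⟨0, by omega⟩ = 0 := by
      have := congrFun hsum ⟨0, by omega⟩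
      simpa using this
    have h1 : g 0 * lam 0 ⟨1, by omega⟩ + g 1 * lam 1 ⟨1, by omega⟩ = 0 := by
      have := congrFun hsum ⟨1, by omega⟩
      simpa using this
    intro j
    fin_cases j
    · have hg0 : g 0 * (lam 0 ⟨0, by omega⟩ * lam 1 ⟨1, by omega⟩
          - lam 1 ⟨0, by omega⟩ * lam 0 ⟨1, by omega⟩) = 0 := by
        linear_combination lam 1 ⟨1, by omega⟩ * h0 - lam 1 ⟨0, by omega⟩ * h1
      exact (mul_eq_zero.mp hg0).resolve_right hE
    · have hg1 : g 1 * (lam 0 ⟨0, by omega⟩ * lam 1 ⟨1, by omega⟩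
          - lam 1 ⟨0, by omega⟩ * lam 0 ⟨1, by omega⟩) = 0 := by
        linear_combination lam 0 ⟨0, by omega⟩ * h1 - lam 0 ⟨1, by omega⟩ * h0
      exact (mul_eq_zero.mp hg1).resolve_right hE
  have hfin2 : Module.finrank ℝ (rowSpan lam) = 2 := by
    rw [rowSpan, finrank_span_eq_card hli, Fintype.card_fin]
  have hrankQ : Q.rank = n - 2 := by
    have h1 := LinearMap.finrank_range_add_finrank_ker (Matrix.mulVecLin Qᵀ)
    rw [hkerT, hfin2, Module.finrank_fin_fun] at h1
    have h2 : Qᵀ.rank = Q.rank := Matrix.rank_transpose Q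
    have h3 : Qᵀ.rank = Module.finrank ℝ (LinearMap.range (Matrix.mulVecLin Qᵀ)) := rfl
    omega
  refine ⟨hker, hrankQ, ?_⟩
  intro C hC hle
  have hU : LinearMap.range (Matrix.mulVecLin Cᵀ) = rowSpan C := by
    rw [Matrix.range_mulVecLin]
    rfl
  have hUfin : Module.finrank ℝ (rowSpan C) = k := by
    rw [← hU]
    have h3 : Cᵀ.rank = Module.finrank ℝ (LinearMap.range (Matrix.mulVecLin Cᵀ)) := rfl
    rw [← h3, Matrix.rank_transpose, hC]
  have hkle : LinearMap.ker (Matrix.mulVecLin Qᵀ) ≤ rowSpan C := by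
    rw [hkerT]; exact hle
  have hres := LinearMap.finrank_range_add_finrank_ker
    ((Matrix.mulVecLin Qᵀ).domRestrict (rowSpan C))
  rw [LinearMap.range_domRestrict] at hres
  have hfk : Module.finrank ℝ
      (LinearMap.ker ((Matrix.mulVecLin Qᵀ).domRestrict (rowSpan C))) = 2 := by
    rw [finrank_ker_domRestrict _ _ hkle, hkerT]
    exact hfin2
  have hrk : (C * Q).rank
      = Module.finrank ℝ (Submodule.map (Matrix.mulVecLin Qᵀ) (rowSpan C)) := by
    rw [← Matrix.rank_transpose (C * Q), Matrix.transpose_mul]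
    have h3 : (Qᵀ * Cᵀ).rank
        = Module.finrank ℝ (LinearMap.range (Matrix.mulVecLin (Qᵀ * Cᵀ))) := rfl
    rw [h3, Matrix.mulVecLin_mul, LinearMap.range_comp, hU]
  have hk2 : 2 ≤ k := by
    rw [← hfin2, ← hUfin]
    exact Submodule.finrank_mono hle
  rw [hrk]
  omega
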